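/- arXiv:2406.07132 — 2 statements merged into one kernel-verified Lean document; each statement's English description precedes it below -/
import Mathlib

section
/- The signless Laplacian spectral radius of the graph $K_2 \vee 6K_1$ equals $5 + \sqrt{21}$, and $K_2 \vee 6K_1$ contains no spanning tree with leaf degree at most $2$. -/
/-- The signless Laplacian matrix `Q(G) = D(G) + A(G)` of a simple graph, over `ℝ`. -/
noncomputable def signlessLap {V : Type*} [Fintype V] [DecidableEq V] (G : SimpleGraph V) :
    Matrix V V ℝ :=
  letI : DecidableRel G.Adj := Classical.decRel _
  G.degMatrix ℝ + G.adjMatrix ℝ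

/-- The signless Laplacian spectral radius `q(G)`: the largest eigenvalue of `Q(G)`. -/
noncomputable def qRadius {V : Type*} [Fintype V] [DecidableEq V] (G : SimpleGraph V) : ℝ :=
  sSup (spectrum ℝ (signlessLap G))

/-- `G` has a spanning tree whose leaf degree is at most `k`, i.e. a spanning tree `T`
in which every vertex is adjacent (in `T`) to at most `k` leaves of `T`. -/
def HasSpanningTreeWithLeafDegLE {V : Type*} (G : SimpleGraph V) (k : ℕ) : Prop :=
  ∃ T : SimpleGraph V, T ≤ G ∧ T.IsTree ∧
    ∀ v : V, {u : V | T.Adj v u ∧ (T.neighborSet u).ncard = 1}.ncard ≤ k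

/-- The join `G ∨ H` of two vertex-disjoint graphs: all edges between the two parts. -/
def SimpleGraph.graphJoin {α β : Type*} (G : SimpleGraph α) (H : SimpleGraph β) :
    SimpleGraph (α ⊕ β) where
  Adj x y :=
    match x, y with
    | Sum.inl a, Sum.inl b => G.Adj a b
    | Sum.inr a, Sum.inr b => H.Adj a b
    | Sum.inl _, Sum.inr _ => True
    | Sum.inr _, Sum.inl _ => True
  symm := ⟨by rintro (a | a) (b | b) h <;> first | trivial | exact G.symm.symm _ _ h | exact H.symm.symm _ _ h⟩
  loopless := ⟨by rintro (a | a) h <;> first | exact G.loopless.irrefl _ h | exact H.loopless.irrefl _ h⟩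

/-- The disjoint union `G ∪ H` of two vertex-disjoint graphs. -/
def SimpleGraph.graphDisjUnion {α β : Type*} (G : SimpleGraph α) (H : SimpleGraph β) :
    SimpleGraph (α ⊕ β) where
  Adj x y :=
    match x, y with
    | Sum.inl a, Sum.inl b => G.Adj a b
    | Sum.inr a, Sum.inr b => H.Adj a b
    | _, _ => False
  symm := ⟨by rintro (a | a) (b | b) h <;> first | trivial | exact G.symm.symm _ _ h | exact H.symm.symm _ _ h⟩
  loopless := ⟨by rintro (a | a) h <;> first | exact G.loopless.irrefl _ h | exact H.loopless.irrefl _ h⟩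

open Matrix
abbrev V8 := Fin 2 ⊕ Fin 6
abbrev G8 : SimpleGraph V8 := (⊤ : SimpleGraph (Fin 2)).graphJoin (⊥ : SimpleGraph (Fin 6))

instance G8.decAdj : DecidableRel G8.Adj := fun x y =>
  match x, y with
  | Sum.inl a, Sum.inl b => inferInstanceAs (Decidable (a ≠ b))
  | Sum.inr _, Sum.inr _ => inferInstanceAs (Decidable False)
  | Sum.inl _, Sum.inr _ => inferInstanceAs (Decidable True)
  | Sum.inr _, Sum.inl _ => inferInstanceAs (Decidable True)

lemma G8_adj (x y : V8) : G8.Adj x y ↔ (x.isLeft ∨ y.isLeft) ∧ x ≠ y := by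
  cases x <;> cases y <;> simp [SimpleGraph.graphJoin, Sum.isLeft]

lemma G8_deg (x : V8) (inst : Fintype (G8.neighborSet x)) :
    @SimpleGraph.degree _ G8 x inst = if x.isLeft then 7 else 2 := by
  have h : @SimpleGraph.degree _ G8 x inst
      = @SimpleGraph.degree _ G8 x (SimpleGraph.neighborSetFintype _ _) := by congr!
  rw [h]
  clear h inst
  revert x; decide

lemma Q_apply (x y : V8) : signlessLap G8 x y =
    (if x = y then (if x.isLeft then 7 else 2) else 0) + (if G8.Adj x y then 1 else 0) := by
  classical
  simp only [signlessLap, Matrix.add_apply, SimpleGraph.degMatrix, SimpleGraph.adjMatrix_apply,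
    Matrix.diagonal_apply]
  rw [G8_deg]
  split <;> split <;> simp

lemma Q_mulVec (v : V8 → ℝ) (x : V8) : (signlessLap G8 *ᵥ v) x =
    (if x.isLeft then 6 * v x + ∑ b : Fin 6, v (Sum.inr b) else 2 * v x)
      + (v (Sum.inl 0) + v (Sum.inl 1)) := by
  rw [Matrix.mulVec, dotProduct]
  simp only [Q_apply]
  rw [Fintype.sum_sum_type]
  rcases x with a | a
  · fin_cases a <;>
    · simp [Fin.sum_univ_two, G8_adj, Fin.ext_iff, add_mul]
      ring
  · simp [Fin.sum_univ_two, G8_adj]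
    ring

lemma sub_mulVec_eq (l : ℝ) (v : V8 → ℝ) (x : V8) :
    ((algebraMap ℝ (Matrix V8 V8 ℝ) l - signlessLap G8) *ᵥ v) x
      = l * v x - (signlessLap G8 *ᵥ v) x := by
  rw [Matrix.sub_mulVec, Algebra.algebraMap_eq_smul_one, Matrix.smul_mulVec,
    Matrix.one_mulVec]
  simp

lemma sqrt21_sq : Real.sqrt 21 ^ 2 = 21 := Real.sq_sqrt (by norm_num)
lemma sqrt21_nonneg : 0 ≤ Real.sqrt 21 := Real.sqrt_nonneg 21
lemma sqrt21_gt_one : 1 < Real.sqrt 21 := by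
  rw [show (1:ℝ) = Real.sqrt 1 by simp]
  exact Real.sqrt_lt_sqrt (by norm_num) (by norm_num)

lemma lam_mem : (5 + Real.sqrt 21) ∈ spectrum ℝ (signlessLap G8) := by
  rw [spectrum.mem_iff]
  intro hu
  have hdet := (Matrix.isUnit_iff_isUnit_det (algebraMap ℝ (Matrix V8 V8 ℝ) (5 + Real.sqrt 21) - signlessLap G8)).mp hu
  have h21 := sqrt21_sq
  set v : V8 → ℝ := fun x => match x with
    | Sum.inl _ => 3 + Real.sqrt 21 | Sum.inr _ => 2 with hvdef
  have hv : (algebraMap ℝ (Matrix V8 V8 ℝ) (5 + Real.sqrt 21) - signlessLap G8) *ᵥ v = 0 := by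
    funext x
    rw [Pi.zero_apply, sub_mulVec_eq, Q_mulVec]
    rcases x with a | a
    · show (5 + Real.sqrt 21) * (3 + Real.sqrt 21)
        - (6 * (3 + Real.sqrt 21) + ∑ _b : Fin 6, (2:ℝ) + ((3 + Real.sqrt 21) + (3 + Real.sqrt 21))) = 0
      rw [Finset.sum_const]
      simp only [Finset.card_univ, Fintype.card_fin, nsmul_eq_mul]
      linear_combination h21
    · show (5 + Real.sqrt 21) * 2 - (2 * 2 + ((3 + Real.sqrt 21) + (3 + Real.sqrt 21))) = 0
      ring
  have hvne : v ≠ 0 := by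
    intro h0
    have h2 : (2:ℝ) = 0 := congrFun h0 (Sum.inr 0)
    norm_num at h2
  have hd0 : (algebraMap ℝ (Matrix V8 V8 ℝ) (5 + Real.sqrt 21) - signlessLap G8).det = 0 :=
    (Matrix.exists_mulVec_eq_zero_iff).mp ⟨v, hvne, hv⟩
  rw [hd0] at hdet
  simp at hdet

lemma spec_le : ∀ x ∈ spectrum ℝ (signlessLap G8), x ≤ 5 + Real.sqrt 21 := by
  intro l hl
  by_contra hgt
  push_neg at hgt
  have h21 := sqrt21_sq
  have h21n := sqrt21_nonneg
  have hl6 : (6:ℝ) < l := by nlinarith [sqrt21_gt_one]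
  have hl2 : l - 2 ≠ 0 := by intro h; linarith
  rw [spectrum.mem_iff] at hl
  have hdet : (algebraMap ℝ (Matrix V8 V8 ℝ) l - signlessLap G8).det = 0 := by
    by_contra hd
    exact hl ((Matrix.isUnit_iff_isUnit_det (algebraMap ℝ (Matrix V8 V8 ℝ) l - signlessLap G8)).mpr (isUnit_iff_ne_zero.mpr hd))
  obtain ⟨v, hvne, hv⟩ := (Matrix.exists_mulVec_eq_zero_iff).mpr hdet
  have hQ : ∀ x, (signlessLap G8 *ᵥ v) x = l * v x := by
    intro x
    have hx := congrFun hv x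
    rw [Pi.zero_apply, sub_mulVec_eq] at hx
    linarith
  have hrel : ∀ b : Fin 6, (l - 2) * v (Sum.inr b) = v (Sum.inl 0) + v (Sum.inl 1) := by
    intro b
    have h := hQ (Sum.inr b)
    rw [Q_mulVec] at h
    simp only [Sum.isLeft_inr, Bool.false_eq_true, if_false] at h
    linear_combination -h
  have hall : ∀ b : Fin 6, v (Sum.inr b) = v (Sum.inr 0) := by
    intro b
    have h := sub_eq_zero.mpr ((hrel b).trans (hrel 0).symm)
    have : (l - 2) * (v (Sum.inr b) - v (Sum.inr 0)) = 0 := by linear_combination h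
    rcases mul_eq_zero.mp this with h' | h'
    · exact absurd h' hl2
    · linarith
  have hsum : ∑ b : Fin 6, v (Sum.inr b) = 6 * v (Sum.inr 0) := by
    rw [Finset.sum_congr rfl (fun b _ => hall b), Finset.sum_const]
    simp [Finset.card_univ]
  have h0 := hQ (Sum.inl 0)
  have h1 := hQ (Sum.inl 1)
  rw [Q_mulVec] at h0 h1
  simp only [Sum.isLeft_inl, if_true, hsum] at h0 h1
  have heq : v (Sum.inl 0) = v (Sum.inl 1) := by
    have h' : (l - 6) * (v (Sum.inl 0) - v (Sum.inl 1)) = 0 := by linear_combination h1 - h0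
    rcases mul_eq_zero.mp h' with h'' | h''
    · linarith
    · linarith
  have hfac : l ^ 2 - 10 * l + 4 > 0 := by nlinarith
  have hkey : (l ^ 2 - 10 * l + 4) * v (Sum.inl 0) = 0 := by
    linear_combination (6:ℝ) * hrel 0 - (l - 2) * h0 - (l + 4) * heq
  have hv0 : v (Sum.inl 0) = 0 := by
    rcases mul_eq_zero.mp hkey with h' | h'
    · linarith
    · exact h'
  have hzero : v = 0 := by
    funext x
    rcases x with a | a
    · fin_cases a
      · exact hv0
      · exact heq ▸ hv0
    · have h1v : v (Sum.inl 1) = 0 := heq ▸ hv0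
      have h' : (l - 2) * v (Sum.inr a) = 0 := by rw [hrel a, hv0, h1v]; ring
      rcases mul_eq_zero.mp h' with h'' | h''
      · exact absurd h'' hl2
      · exact h''
  exact hvne hzero

lemma no_tree : ¬ HasSpanningTreeWithLeafDegLE G8 2 := by
  rintro ⟨T, hTG, hTree, hleaf⟩
  classical
  set χ : V8 → V8 → ℕ := fun x y => if T.Adj x y then 1 else 0 with hχ
  have hχsymm : ∀ x y, χ x y = χ y x := by
    intro x y; simp only [hχ]; rw [SimpleGraph.adj_comm]
  have hχle : ∀ x y, χ x y ≤ 1 := by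
    intro x y; simp only [hχ]; split <;> norm_num
  have hnoRR : ∀ a b : Fin 6, ¬ T.Adj (Sum.inr a) (Sum.inr b) := by
    intro a b h
    have h2 := hTG h
    rw [G8_adj] at h2
    simp at h2
  have hχRR : ∀ a b : Fin 6, χ (Sum.inr a) (Sum.inr b) = 0 := by
    intro a b; simp only [hχ]; rw [if_neg (hnoRR a b)]
  have hdegsum : ∀ x : V8, T.degree x = ∑ y : V8, χ x y := by
    intro x
    rw [SimpleGraph.degree, SimpleGraph.neighborFinset_eq_filter, Finset.card_filter]
  have hcard : Fintype.card V8 = 8 := by simp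
  have hedge : T.edgeFinset.card = 7 := by
    have h := hTree.card_edgeFinset
    rw [hcard] at h
    omega
  have hhand : ∑ x : V8, T.degree x = 14 := by
    rw [SimpleGraph.sum_degrees_eq_twice_card_edges, hedge]
  set d : Fin 6 → ℕ := fun b => χ (Sum.inr b) (Sum.inl 0) + χ (Sum.inr b) (Sum.inl 1) with hd
  have hdr : ∀ b, T.degree (Sum.inr b) = d b := by
    intro b
    have hz : ∑ c : Fin 6, χ (Sum.inr b) (Sum.inr c) = 0 :=
      Finset.sum_eq_zero fun c _ => hχRR b c
    rw [hdegsum, Fintype.sum_sum_type, Fin.sum_univ_two, hz, add_zero]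
  have hsum7 : ∑ b : Fin 6, d b ≤ 7 := by
    have hself : ∀ i : Fin 2, χ (Sum.inl i) (Sum.inl i) = 0 := by
      intro i; simp only [hχ]; rw [if_neg (T.loopless.irrefl _)]
    have h14 : (T.degree (Sum.inl 0) + T.degree (Sum.inl 1)) + ∑ b : Fin 6, d b = 14 := by
      rw [← hhand, Fintype.sum_sum_type, Fin.sum_univ_two]
      congr 1
      exact Finset.sum_congr rfl fun b _ => (hdr b).symm
    have hdl : T.degree (Sum.inl 0) + T.degree (Sum.inl 1)
        = (χ (Sum.inl 0) (Sum.inl 1) + χ (Sum.inl 1) (Sum.inl 0)) + ∑ b : Fin 6, d b := by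
      rw [hdegsum, hdegsum, Fintype.sum_sum_type, Fintype.sum_sum_type, Fin.sum_univ_two,
        Fin.sum_univ_two, hself 0, hself 1]
      have : ∀ b : Fin 6, d b = χ (Sum.inl 0) (Sum.inr b) + χ (Sum.inl 1) (Sum.inr b) := by
        intro b; rw [hd]; simp only; rw [hχsymm (Sum.inr b) (Sum.inl 0), hχsymm (Sum.inr b) (Sum.inl 1)]
      rw [Finset.sum_congr rfl fun b _ => this b, Finset.sum_add_distrib]
      ring
    have he := hχle (Sum.inl 0) (Sum.inl 1)
    have he' := hχle (Sum.inl 1) (Sum.inl 0)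
    omega
  have hd1 : ∀ b : Fin 6, 1 ≤ d b := by
    intro b
    obtain ⟨w⟩ := hTree.isConnected.preconnected (Sum.inr b) (Sum.inl 0)
    have hne : (Sum.inr b : V8) ≠ Sum.inl 0 := by simp
    have hadj : T.Adj (Sum.inr b) (w.getVert 1) := SimpleGraph.Walk.adj_snd (p := w) (SimpleGraph.Walk.not_nil_of_ne (p := w) hne)
    rcases hy : w.getVert 1 with i | c
    · rw [hy] at hadj
      have hdb : d b = χ (Sum.inr b) (Sum.inl 0) + χ (Sum.inr b) (Sum.inl 1) := rfl
      have h01 : i = 0 ∨ i = 1 := by omega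
      rcases h01 with rfl | rfl
      · have h1 : χ (Sum.inr b) (Sum.inl 0) = 1 := by simp only [hχ]; rw [if_pos hadj]
        omega
      · have h1 : χ (Sum.inr b) (Sum.inl 1) = 1 := by simp only [hχ]; rw [if_pos hadj]
        omega
    · rw [hy] at hadj
      exact absurd hadj (hnoRR b c)
  have hAcard : 5 ≤ (Finset.univ.filter (fun b => d b = 1)).card := by
    have hterm : ∀ b : Fin 6, 2 ≤ d b + (if d b = 1 then 1 else 0) := by
      intro b
      have := hd1 b
      by_cases h : d b = 1 <;> simp [h] <;> omega
    have hsum12 : 12 ≤ ∑ b : Fin 6, (d b + if d b = 1 then 1 else 0) := by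
      calc (12:ℕ) = ∑ _b : Fin 6, 2 := by simp
      _ ≤ _ := Finset.sum_le_sum fun b _ => hterm b
    rw [Finset.sum_add_distrib, ← Finset.card_filter] at hsum12
    omega
  have hleafb : ∀ b ∈ Finset.univ.filter (fun b => d b = 1),
      ∃ i : Fin 2, T.Adj (Sum.inl i) (Sum.inr b)
      ∧ (T.neighborSet (Sum.inr b)).ncard = 1 := by
    intro b hb
    rw [Finset.mem_filter] at hb
    have hb1 : d b = 1 := hb.2
    have hone : ∃ i : Fin 2, T.Adj (Sum.inr b) (Sum.inl i)
        ∧ ∀ j : Fin 2, T.Adj (Sum.inr b) (Sum.inl j) → j = i := by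
      rw [hd] at hb1
      simp only [hχ] at hb1
      by_cases h0 : T.Adj (Sum.inr b) (Sum.inl 0) <;>
        by_cases h1 : T.Adj (Sum.inr b) (Sum.inl 1)
      · rw [if_pos h0, if_pos h1] at hb1; omega
      · refine ⟨0, h0, fun j hj => ?_⟩
        fin_cases j
        · rfl
        · exact absurd hj h1
      · refine ⟨1, h1, fun j hj => ?_⟩
        fin_cases j
        · exact absurd hj h0
        · rfl
      · rw [if_neg h0, if_neg h1] at hb1; omega
    obtain ⟨i, hi, huniq⟩ := hone
    refine ⟨i, hi.symm, ?_⟩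
    have hset : T.neighborSet (Sum.inr b) = {Sum.inl i} := by
      ext y
      simp only [SimpleGraph.mem_neighborSet, Set.mem_singleton_iff]
      constructor
      · intro hy
        rcases y with j | c
        · rw [huniq j hy]
        · exact absurd hy (hnoRR b c)
      · intro hy; rw [hy]; exact hi
    rw [hset, Set.ncard_singleton]
  -- pigeonhole
  have himg : (((Finset.univ.filter (fun b => d b = 1)).image (Sum.inr : Fin 6 → V8)) : Set V8)
      ⊆ {u : V8 | T.Adj (Sum.inl 0) u ∧ (T.neighborSet u).ncard = 1}
        ∪ {u : V8 | T.Adj (Sum.inl 1) u ∧ (T.neighborSet u).ncard = 1} := by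
    intro u hu
    simp only [Finset.coe_image, Set.mem_image, Finset.mem_coe] at hu
    obtain ⟨b, hb, rfl⟩ := hu
    obtain ⟨i, hi, hn⟩ := hleafb b hb
    fin_cases i
    · exact Or.inl ⟨hi, hn⟩
    · exact Or.inr ⟨hi, hn⟩
  have hle4 : (Finset.univ.filter (fun b => d b = 1)).card ≤ 4 := by
    have h1 : (((Finset.univ.filter (fun b => d b = 1)).image (Sum.inr : Fin 6 → V8)) : Set V8).ncard
        ≤ ({u : V8 | T.Adj (Sum.inl 0) u ∧ (T.neighborSet u).ncard = 1}
            ∪ {u : V8 | T.Adj (Sum.inl 1) u ∧ (T.neighborSet u).ncard = 1}).ncard :=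
      Set.ncard_le_ncard himg (Set.toFinite _)
    have h2 := Set.ncard_union_le {u : V8 | T.Adj (Sum.inl 0) u ∧ (T.neighborSet u).ncard = 1}
      {u : V8 | T.Adj (Sum.inl 1) u ∧ (T.neighborSet u).ncard = 1}
    have h3 := hleaf (Sum.inl 0)
    have h4 := hleaf (Sum.inl 1)
    have h5 : ((((Finset.univ.filter (fun b => d b = 1)).image (Sum.inr : Fin 6 → V8))) : Set V8).ncard = (Finset.univ.filter (fun b => d b = 1)).card := by
      rw [Set.ncard_coe_finset, Finset.card_image_of_injective _ Sum.inr_injective]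
    omega
  omega

lemma qRadius_G8 : qRadius G8 = 5 + Real.sqrt 21 := by
  show sSup (spectrum ℝ (signlessLap G8)) = 5 + Real.sqrt 21
  apply le_antisymm
  · exact csSup_le ⟨_, lam_mem⟩ spec_le
  · exact le_csSup ⟨5 + Real.sqrt 21, fun x hx => spec_le x hx⟩ lam_mem

/-- `q(K₂ ∨ 6K₁) = 5 + Real.sqrt 21` and `K₂ ∨ 6K₁` has no spanning tree with leaf degree at
most 2. -/
theorem qRadius_K2_join_6K1 :
    qRadius ((⊤ : SimpleGraph (Fin 2)).graphJoin (⊥ : SimpleGraph (Fin 6))) = 5 + Real.sqrt 21 ∧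
      ¬ HasSpanningTreeWithLeafDegLE ((⊤ : SimpleGraph (Fin 2)).graphJoin (⊥ : SimpleGraph (Fin 6))) 2 := by
  exact ⟨qRadius_G8, no_tree⟩
end

section
/- Let $k$ be a positive integer, let $s \geq 3$ be an integer, and set $n = (k+2)s$. Then the signless Laplacian spectral radius of the graph $K_s \vee (n-s)K_1$ is strictly less than $\theta(k,n)$, the largest real root of $x^{3}-(3n-2k-5)x^{2}+n(2n-2k-5)x-2(n-k-3)(n-k-2)=0$. -/
lemma cubic_lt (p q r θ : ℝ)
    (hroot : θ^3 - p*θ^2 + q*θ - r = 0)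
    (hmax : ∀ x : ℝ, x^3 - p*x^2 + q*x - r = 0 → x ≤ θ)
    {x : ℝ} (hx : x^3 - p*x^2 + q*x - r < 0) : x < θ := by
  by_contra hcon
  push_neg at hcon
  set M : ℝ := 1 + |p| + |q| + |r| + |x| with hM
  have hap := abs_nonneg p; have haq := abs_nonneg q
  have har := abs_nonneg r; have hax := abs_nonneg x
  have hxM : x < M := by linarith [le_abs_self x]
  have hM1 : 1 ≤ M := by linarith
  have hM0 : 0 ≤ M := by linarith
  have hfM : (0:ℝ) < M^3 - p*M^2 + q*M - r := by
    have e1 : p*M^2 ≤ |p| * M^2 := mul_le_mul_of_nonneg_right (le_abs_self p) (sq_nonneg M)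
    have e2 : -|q| * M ≤ q*M := mul_le_mul_of_nonneg_right (neg_abs_le q) hM0
    have e3 : r ≤ |r| := le_abs_self r
    nlinarith [mul_nonneg (mul_nonneg hM0 (by linarith : (0:ℝ) ≤ M - 1)) haq,
      mul_nonneg (by nlinarith : (0:ℝ) ≤ M^2 - 1) har,
      mul_nonneg (mul_nonneg hM0 hM0) hax, sq_nonneg M]
  have hcont : ContinuousOn (fun z : ℝ => z^3 - p*z^2 + q*z - r) (Set.Icc x M) :=
    (Continuous.continuousOn (by continuity))
  obtain ⟨y, hy, hfy⟩ := intermediate_value_Ioo hxM.le hcont ⟨hx, hfM⟩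
  have h1 := hmax y hfy
  have h2 := hy.1
  linarith


set_option maxHeartbeats 2000000 in
/-- With `n = (k+2)s` and `s ≥ 3`, the signless Laplacian spectral radius of
`K_s ∨ (n-s)K₁` is strictly less than `θ(k,n)`, the largest real root of
`x³-(3n-2k-5)x²+n(2n-2k-5)x-2(n-k-3)(n-k-2) = 0`. -/
theorem qRadius_complete_split_lt_theta (k s n : ℕ) (hk : 1 ≤ k) (hs : 3 ≤ s)
    (hn : n = (k + 2) * s) (θ : ℝ)
    (hroot : θ ^ 3 - (3 * (n : ℝ) - 2 * k - 5) * θ ^ 2 + (n : ℝ) * (2 * (n : ℝ) - 2 * k - 5) * θ - 2 * ((n : ℝ) - k - 3) * ((n : ℝ) - k - 2) = 0)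
    (hmax : ∀ x : ℝ, x ^ 3 - (3 * (n : ℝ) - 2 * k - 5) * x ^ 2 + (n : ℝ) * (2 * (n : ℝ) - 2 * k - 5) * x - 2 * ((n : ℝ) - k - 3) * ((n : ℝ) - k - 2) = 0 → x ≤ θ) :
    qRadius ((⊤ : SimpleGraph (Fin s)).graphJoin (⊥ : SimpleGraph (Fin (n - s)))) < θ := by
  have hsn : s ≤ n := by
    rw [hn]; calc s = 1 * s := (one_mul s).symm
    _ ≤ (k + 2) * s := Nat.mul_le_mul_right s (by omega)
  have hkR : (1:ℝ) ≤ (k:ℝ) := by exact_mod_cast hk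
  have hsR : (3:ℝ) ≤ (s:ℝ) := by exact_mod_cast hs
  have hN : (n:ℝ) = ((k:ℝ) + 2) * s := by rw [hn]; push_cast; ring
  have htR : (((n - s : ℕ)):ℝ) = ((k:ℝ) + 1) * s := by
    rw [Nat.cast_sub hsn, hN]; ring
  set kk := (k:ℝ) with hkk
  set ss := (s:ℝ) with hss
  have ha : (0:ℝ) ≤ kk - 1 := by linarith
  have hb : (0:ℝ) ≤ ss - 3 := by linarith
  have mab := mul_nonneg ha hb
  have mab2 := mul_nonneg mab hb
  have mab3 := mul_nonneg mab2 hb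
  have ma2 := mul_nonneg ha ha
  have ma2b := mul_nonneg ma2 hb
  have ma2b2 := mul_nonneg ma2b hb
  have ma2b3 := mul_nonneg ma2b2 hb
  have mb2 := mul_nonneg hb hb
  have mb3 := mul_nonneg mb2 hb
  -- the quadratic root
  set d : ℝ := Real.sqrt (((kk+2)*ss + 2*ss - 2)^2 - 8*ss*(ss-1)) with hd
  set q₀ : ℝ := (((kk+2)*ss + 2*ss - 2) + d)/2 with hq₀
  have hΔ : (0:ℝ) ≤ ((kk+2)*ss + 2*ss - 2)^2 - 8*ss*(ss-1) := by
    nlinarith [mab, mab2, ma2, ma2b, ma2b2, mb2, ha, hb]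
  have hsqΔ : d^2 = ((kk+2)*ss + 2*ss - 2)^2 - 8*ss*(ss-1) := by
    rw [hd]; exact Real.sq_sqrt hΔ
  have hgq₀ : q₀^2 - ((kk+2)*ss + 2*ss - 2)*q₀ + 2*ss*(ss-1) = 0 := by
    rw [hq₀]; linear_combination (1/4) * hsqΔ
  have hq₀n2 : (kk+2)*ss - 2 ≤ q₀ := by
    have h1 : ((kk+2)*ss - 2*ss - 2)^2 ≤ ((kk+2)*ss + 2*ss - 2)^2 - 8*ss*(ss-1) := by
      nlinarith [mab, mab2, ma2, ma2b, ma2b2, mb2, ha, hb]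
    have h2 : (kk+2)*ss - 2*ss - 2 ≤ d := by
      refine le_trans (le_abs_self _) ?_
      rw [← Real.sqrt_sq_eq_abs, hd]
      exact Real.sqrt_le_sqrt h1
    rw [hq₀]; linarith
  -- key cubic inequality at quadratic roots
  have hkey : ∀ x : ℝ, x^2 - ((kk+2)*ss + 2*ss - 2)*x + 2*ss*(ss-1) = 0 →
      (kk+2)*ss - 2 ≤ x →
      x ^ 3 - (3 * ((kk+2)*ss) - 2 * kk - 5) * x ^ 2
        + ((kk+2)*ss) * (2 * ((kk+2)*ss) - 2 * kk - 5) * x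
        - 2 * (((kk+2)*ss) - kk - 3) * (((kk+2)*ss) - kk - 2) < 0 := by
    intro x hg hx
    have hfx : x ^ 3 - (3 * ((kk+2)*ss) - 2 * kk - 5) * x ^ 2
        + ((kk+2)*ss) * (2 * ((kk+2)*ss) - 2 * kk - 5) * x
        - 2 * (((kk+2)*ss) - kk - 3) * (((kk+2)*ss) - kk - 2)
        = ((-2)*kk*ss^2 + 6*kk*ss - 4*kk - 2*ss^2 + 8*ss - 6) * x
          + (4*kk*ss^3 - 16*kk*ss^2 + 22*kk*ss - 10*kk + 4*ss^3 - 18*ss^2 + 26*ss - 12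
             - 2*kk^2 + 4*kk^2*ss - 2*kk^2*ss^2) := by
      linear_combination (x + ((kk+2)*ss + 2*ss - 2) - (3 * ((kk+2)*ss) - 2 * kk - 5)) * hg
    have hA : (-2)*kk*ss^2 + 6*kk*ss - 4*kk - 2*ss^2 + 8*ss - 6 ≤ 0 := by
      nlinarith [mab, mab2, ma2, mb2, ha, hb]
    have hAB : ((-2)*kk*ss^2 + 6*kk*ss - 4*kk - 2*ss^2 + 8*ss - 6) * ((kk+2)*ss - 2)
        + (4*kk*ss^3 - 16*kk*ss^2 + 22*kk*ss - 10*kk + 4*ss^3 - 18*ss^2 + 26*ss - 12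
           - 2*kk^2 + 4*kk^2*ss - 2*kk^2*ss^2) < 0 := by
      nlinarith [mab, mab2, mab3, ma2, ma2b, ma2b2, ma2b3, mb2, mb3, ha, hb]
    rw [hfx]
    nlinarith [mul_nonneg (by linarith : (0:ℝ) ≤ -((-2)*kk*ss^2 + 6*kk*ss - 4*kk - 2*ss^2 + 8*ss - 6))
      (by linarith : (0:ℝ) ≤ x - ((kk+2)*ss - 2))]
  -- bound the spectrum
  set G := ((⊤ : SimpleGraph (Fin s)).graphJoin (⊥ : SimpleGraph (Fin (n - s)))) with hGdef
  letI : DecidableRel G.Adj := Classical.decRel _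
  have hbound : ∀ μ ∈ spectrum ℝ (signlessLap G), μ ≤ q₀ := by
    intro μ hμ
    -- eigenvector
    rw [spectrum.mem_iff, Matrix.isUnit_iff_isUnit_det, isUnit_iff_ne_zero, not_not] at hμ
    obtain ⟨v, hv0, hv⟩ := (Matrix.exists_mulVec_eq_zero_iff).mpr hμ
    have hQv : (signlessLap G).mulVec v = μ • v := by
      rw [Matrix.sub_mulVec] at hv
      have h1 : (algebraMap ℝ (Matrix (Fin s ⊕ Fin (n-s)) (Fin s ⊕ Fin (n-s)) ℝ) μ).mulVec v
          = μ • v := by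
        rw [Algebra.algebraMap_eq_smul_one, Matrix.smul_mulVec, Matrix.one_mulVec]
      rw [h1] at hv
      exact (sub_eq_zero.mp hv).symm
    -- eigen equations
    have hQ : signlessLap G = G.degMatrix ℝ + G.adjMatrix ℝ := rfl
    have h1 : ∀ (a b : Fin s), G.Adj (Sum.inl a) (Sum.inl b) ↔ a ≠ b := by
      intro a b; simp [hGdef, SimpleGraph.graphJoin]
    have h2 : ∀ (a : Fin s) (u : Fin (n-s)), G.Adj (Sum.inl a) (Sum.inr u) := by
      intro a u; simp [hGdef, SimpleGraph.graphJoin]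
    have h3 : ∀ (u : Fin (n-s)) (a : Fin s), G.Adj (Sum.inr u) (Sum.inl a) := by
      intro u a; simp [hGdef, SimpleGraph.graphJoin]
    have h4 : ∀ (u w : Fin (n-s)), ¬ G.Adj (Sum.inr u) (Sum.inr w) := by
      intro u w; simp [hGdef, SimpleGraph.graphJoin]
    set S := ∑ b : Fin s, v (Sum.inl b) with hS
    set T := ∑ u : Fin (n-s), v (Sum.inr u) with hT
    have e1 : ∀ a : Fin s, (ss - 1 + ((kk+1)*ss)) * v (Sum.inl a) + ((S - v (Sum.inl a)) + T)
        = μ * v (Sum.inl a) := by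
      intro a
      have hi := congrFun hQv (Sum.inl a)
      rw [hQ, Matrix.add_mulVec, Pi.add_apply, SimpleGraph.degMatrix_mulVec_apply,
        SimpleGraph.adjMatrix_mulVec_apply, Pi.smul_apply, smul_eq_mul] at hi
      have hdeg : (G.degree (Sum.inl a) : ℝ) = ss - 1 + ((kk+1)*ss) := by
        rw [SimpleGraph.degree, SimpleGraph.neighborFinset_eq_filter, Finset.card_filter]
        push_cast
        rw [Fintype.sum_sum_type]
        simp only [h1, h2, if_true]
        have e : ∀ b : Fin s, (if a ≠ b then (1:ℝ) else 0) = 1 - (if a = b then (1:ℝ) else 0) := by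
          intro b; by_cases h : a = b <;> simp [h]
        rw [Finset.sum_congr rfl (fun b _ => e b), Finset.sum_sub_distrib, Finset.sum_ite_eq]
        simp [← htR]
        exact hss.symm
      have hsum : ∑ u ∈ G.neighborFinset (Sum.inl a), v u = (S - v (Sum.inl a)) + T := by
        rw [SimpleGraph.neighborFinset_eq_filter, Finset.sum_filter, Fintype.sum_sum_type]
        simp only [h1, h2, if_true]
        have e : ∀ b : Fin s, (if a ≠ b then v (Sum.inl b) else 0)
            = v (Sum.inl b) - (if a = b then v (Sum.inl b) else 0) := by
          intro b; by_cases h : a = b <;> simp [h]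
        rw [Finset.sum_congr rfl (fun b _ => e b), Finset.sum_sub_distrib, Finset.sum_ite_eq]
        simp [hS, hT]
      rw [hdeg, hsum] at hi
      exact hi
    have e2 : ∀ w : Fin (n-s), ss * v (Sum.inr w) + S = μ * v (Sum.inr w) := by
      intro w
      have hi := congrFun hQv (Sum.inr w)
      rw [hQ, Matrix.add_mulVec, Pi.add_apply, SimpleGraph.degMatrix_mulVec_apply,
        SimpleGraph.adjMatrix_mulVec_apply, Pi.smul_apply, smul_eq_mul] at hi
      have hdeg : (G.degree (Sum.inr w) : ℝ) = ss := by
        rw [SimpleGraph.degree, SimpleGraph.neighborFinset_eq_filter, Finset.card_filter]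
        push_cast
        rw [Fintype.sum_sum_type]
        simp only [h3, h4, if_true, if_false]
        simp
        exact hss.symm
      have hsum : ∑ u ∈ G.neighborFinset (Sum.inr w), v u = S := by
        rw [SimpleGraph.neighborFinset_eq_filter, Finset.sum_filter, Fintype.sum_sum_type]
        simp only [h3, h4, if_true, if_false]
        simp [hS]
      rw [hdeg, hsum] at hi
      exact hi
    -- case split
    by_cases hc : μ ≤ (kk+2)*ss - 2
    · exact le_trans hc hq₀n2
    push_neg at hc
    have hμs : ss < μ := by nlinarith [mab, ha, hb]
    -- summed equations
    have h5 : (ss - 1 + ((kk+1)*ss)) * S + ((ss * S - S) + ss * T) = μ * S := by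
      have := Finset.sum_congr rfl (fun a (_ : a ∈ Finset.univ) => e1 a)
      simpa [Finset.sum_add_distrib, Finset.sum_sub_distrib, ← Finset.mul_sum,
        Finset.sum_const, Finset.card_univ, nsmul_eq_mul, ← hS, ← hT] using this
    have h6 : ss * T + ((kk+1)*ss) * S = μ * T := by
      have := Finset.sum_congr rfl (fun w (_ : w ∈ Finset.univ) => e2 w)
      simpa [Finset.sum_add_distrib, ← Finset.mul_sum, Finset.sum_const, Finset.card_univ,
        nsmul_eq_mul, htR, ← hS, ← hT] using this
    -- S ≠ 0
    have hS0 : S ≠ 0 := by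
      intro h0
      have hvr : ∀ w : Fin (n-s), v (Sum.inr w) = 0 := by
        intro w
        have h7 : (μ - ss) * v (Sum.inr w) = 0 := by
          have := e2 w; rw [h0] at this; linear_combination (-1) * this
        rcases mul_eq_zero.mp h7 with h | h
        · exfalso; linarith
        · exact h
      have hT0 : T = 0 := by rw [hT]; exact Finset.sum_eq_zero (fun w _ => hvr w)
      have hvl : ∀ a : Fin s, v (Sum.inl a) = 0 := by
        intro a
        have h7 : (μ - ((kk+2)*ss - 2)) * v (Sum.inl a) = 0 := by
          have := e1 a; rw [h0, hT0] at this; linear_combination (-1) * this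
        rcases mul_eq_zero.mp h7 with h | h
        · exfalso; linarith
        · exact h
      apply hv0
      funext i
      cases i with
      | inl a => exact hvl a
      | inr w => exact hvr w
    -- quadratic equation for μ
    have h8 : (μ^2 - ((kk+2)*ss + 2*ss - 2)*μ + 2*ss*(ss-1)) * S = 0 := by
      linear_combination (ss - μ) * h5 + (-ss) * h6
    have hgμ : μ^2 - ((kk+2)*ss + 2*ss - 2)*μ + 2*ss*(ss-1) = 0 :=
      (mul_eq_zero.mp h8).resolve_right hS0
    -- μ ≤ q₀
    have h9 : (2*μ - ((kk+2)*ss + 2*ss - 2))^2 = ((kk+2)*ss + 2*ss - 2)^2 - 8*ss*(ss-1) := by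
      linear_combination 4 * hgμ
    have h10 : 2*μ - ((kk+2)*ss + 2*ss - 2) ≤ d := by
      refine le_trans (le_abs_self _) ?_
      rw [← Real.sqrt_sq_eq_abs, hd, h9]
    rw [hq₀]; linarith
  -- conclude
  have hfq₀ : q₀ ^ 3 - (3 * (n : ℝ) - 2 * kk - 5) * q₀ ^ 2
      + (n : ℝ) * (2 * (n : ℝ) - 2 * kk - 5) * q₀
      - 2 * ((n : ℝ) - kk - 3) * ((n : ℝ) - kk - 2) < 0 := by
    rw [hN]; exact hkey q₀ hgq₀ hq₀n2
  have hq₀θ : q₀ < θ :=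
    cubic_lt (3 * (n : ℝ) - 2 * kk - 5) ((n : ℝ) * (2 * (n : ℝ) - 2 * kk - 5))
      (2 * ((n : ℝ) - kk - 3) * ((n : ℝ) - kk - 2)) θ hroot hmax hfq₀
  have h0q₀ : (0:ℝ) ≤ q₀ := by nlinarith [hq₀n2, mab, ha, hb]
  rw [qRadius]
  exact lt_of_le_of_lt (Real.sSup_le hbound h0q₀) hq₀θ
end
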